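/- If T : X → 2^X is 3-cyclic monotone and maximal monotone, then T is paramonotone. -/

import Mathlib

/-- A 3-cyclic monotone and maximal monotone operator is paramonotone. -/
theorem threeCyclic_maximal_is_paramonotone
    {X : Type*} [NormedAddCommGroup X] [InnerProductSpace ℝ X] [CompleteSpace X]
    (T : X → Set X)
    (hmono : ∀ x x' y y', x' ∈ T x → y' ∈ T y → (0:ℝ) ≤ inner ℝ (x - y) (x' - y'))
    (h3cm : ∀ x x' y y' z z', x' ∈ T x → y' ∈ T y → z' ∈ T z →
      (0:ℝ) ≤ inner ℝ (x - y) x' + inner ℝ (y - z) y' + inner ℝ (z - x) z')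
    (hmax : ∀ a a', (∀ x x', x' ∈ T x → (0:ℝ) ≤ inner ℝ (x - a) (x' - a')) → a' ∈ T a) :
    ∀ x x' y y', x' ∈ T x → y' ∈ T y →
      (inner ℝ (x - y) (x' - y') : ℝ) = 0 → x' ∈ T y ∧ y' ∈ T x := by
  intro x x' y y' hx hy h0
  constructor
  · apply hmax
    intro z z' hz
    have h3 := h3cm y y' x x' z z' hy hx hz
    simp only [inner_sub_left, inner_sub_right] at h0 h3 ⊢
    linarith
  · apply hmax
    intro z z' hz
    have h3 := h3cm x x' y y' z z' hx hy hz
    simp only [inner_sub_left, inner_sub_right] at h0 h3 ⊢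
    linarith
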